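/- Let δ ∈ (0, 1/2], v_+ ∈ ℝ, r a positive integer, H ≥ 1 a real. Let X : [0, rH] → ℝ be a function (position of a walker) with X(0) = x. Suppose there exist j_0 ∈ {0, …, r−1} and a real y' with (3/4)δH ≤ y' − (x + j_0 H v_+) ≤ 2δH such that whenever X(j_0 H) ≤ y' one has X((j_0+1)H) ≤ y' + (v_+ − 3δ)H. If for all j ∈ {0, …, r−1} we have X((j+1)H) − X(jH) < (v_+ + δ/(2r))H, then X(rH) − x ≤ (v_+ − δ/(2r)) rH. -/

import Mathlib

theorem stmt6 (δ vplus H x y' : ℝ) (r j0 : ℕ)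
    (hδ : 0 < δ ∧ δ ≤ 1 / 2) (hr : 1 ≤ r) (hH : 1 ≤ H)
    (X : ℝ → ℝ) (hX0 : X 0 = x)
    (hj0 : j0 ≤ r - 1)
    (hy'lo : (3 / 4) * δ * H ≤ y' - (x + (j0 : ℝ) * H * vplus))
    (hy'hi : y' - (x + (j0 : ℝ) * H * vplus) ≤ 2 * δ * H)
    (htrap : X ((j0 : ℝ) * H) ≤ y' → X (((j0 : ℝ) + 1) * H) ≤ y' + (vplus - 3 * δ) * H)
    (hslow : ∀ j : ℕ, j < r →
      X (((j : ℝ) + 1) * H) - X ((j : ℝ) * H) < (vplus + δ / (2 * (r : ℝ))) * H) :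
    X ((r : ℝ) * H) - x ≤ (vplus - δ / (2 * (r : ℝ))) * ((r : ℝ) * H) := by
  obtain ⟨hδ0, hδ2⟩ := hδ
  have hrR : (0:ℝ) < (r:ℝ) := by exact_mod_cast hr
  have hH0 : (0:ℝ) < H := lt_of_lt_of_le one_pos hH
  set D : ℝ := δ / (2 * (r:ℝ)) with hD
  have hDr : D * (2 * (r:ℝ)) = δ := by
    rw [hD]; exact div_mul_cancel₀ δ (by positivity)
  have hD0 : 0 < D := div_pos hδ0 (by positivity)
  have hj0r : j0 < r := by omega
  have tel : ∀ b : ℕ, b ≤ r → ∀ a : ℕ, a ≤ b →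
      X ((b:ℝ) * H) - X ((a:ℝ) * H) ≤ ((b:ℝ) - (a:ℝ)) * ((vplus + D) * H) := by
    intro b
    induction b with
    | zero => intro _ a ha; interval_cases a; simp
    | succ n ih =>
      intro hb a ha
      rcases Nat.lt_or_ge a (n+1) with h1 | h1
      · have ha' : a ≤ n := by omega
        have hs := hslow n (by omega)
        have ihn := ih (by omega) a ha'
        push_cast at ihn hs ⊢
        rw [hD] at hs
        nlinarith [ihn, hs]
      · have : a = n + 1 := by omega
        subst this
        simp
  by_cases h : X ((j0 : ℝ) * H) ≤ y'
  · have h2 := htrap h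
    have t := tel r le_rfl (j0+1) (by omega)
    push_cast at t
    have hle : ((r:ℝ) - ((j0:ℝ)+1)) ≤ (r:ℝ) := by linarith [Nat.cast_nonneg (α := ℝ) j0]
    have hge : (0:ℝ) ≤ (r:ℝ) - ((j0:ℝ)+1) := by
      have : (j0:ℝ) + 1 ≤ (r:ℝ) := by exact_mod_cast hj0r
      linarith
    nlinarith [mul_nonneg hge (mul_pos hD0 hH0).le, mul_le_mul_of_nonneg_right hle (mul_pos hD0 hH0).le]
  · push_neg at h
    have t := tel j0 (by omega) 0 (by omega)
    simp only [Nat.cast_zero, zero_mul, hX0] at t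
    have hj0le : (j0:ℝ) ≤ (r:ℝ) - 1 := by
      have : (j0:ℝ) + 1 ≤ (r:ℝ) := by exact_mod_cast hj0r
      linarith
    have hDH : 0 < D * H := mul_pos hD0 hH0
    nlinarith [mul_le_mul_of_nonneg_right hj0le hDH.le, mul_pos hδ0 hH0]
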